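/- arXiv:2406.19810 — 7 statements merged into one kernel-verified Lean document; each statement's English description precedes it below -/
import Mathlib

section
/- Let B ⊆ [0,1] be a Bernstein set equipped with the trace σ-algebra 𝓕 = {A ∩ B : A Borel in [0,1]}. Then the assignment P(A ∩ B) := λ(A) (λ = Lebesgue measure) is well-defined, i.e. if A ∩ B = A' ∩ B for Borel sets A, A', then λ(A) = λ(A'), and P defines a probability measure on (B, 𝓕). -/
open MeasureTheory

/-- For a Bernstein set `B ⊆ [0,1]` with the trace σ-algebra
`𝓕 = {A ∩ B : A Borel}`, the assignment `P(A ∩ B) := λ(A)` is well-defined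
(if `A ∩ B = A' ∩ B` for Borel `A, A'` then `λ(A) = λ(A')`) and defines a
probability measure on `(B, 𝓕)`. Here the subtype `↥B` carries the trace σ-algebra. -/
theorem stmt_1 (B : Set ℝ) (hB : B ⊆ Set.Icc 0 1)
    (hBern : ∀ C : Set ℝ, C ⊆ Set.Icc 0 1 → IsClosed C → ¬ C.Countable →
      (B ∩ C).Nonempty ∧ (Bᶜ ∩ C).Nonempty) :
    (∀ A A' : Set ℝ, MeasurableSet A → MeasurableSet A' → A ∩ B = A' ∩ B →
      volume.restrict (Set.Icc 0 1) A = volume.restrict (Set.Icc 0 1) A') ∧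
    ∃ P : Measure B, IsProbabilityMeasure P ∧
      ∀ A : Set ℝ, MeasurableSet A →
        P (Subtype.val ⁻¹' A) = volume.restrict (Set.Icc 0 1) A := by
  -- L1: measurable sets inside [0,1] disjoint from B are null
  have L1 : ∀ S : Set ℝ, MeasurableSet S → S ⊆ Set.Icc 0 1 → S ∩ B = ∅ → volume S = 0 := by
    intro S hS hSIcc hSB
    by_contra h
    have hfin : volume S ≠ ⊤ := by
      refine ne_top_of_le_ne_top ?_ (measure_mono hSIcc)
      simp [Real.volume_Icc]
    obtain ⟨K, hKS, hKc, hlt⟩ := hS.exists_isCompact_lt_add hfin h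
    have hK0 : volume K ≠ 0 := by
      intro h0
      rw [h0, zero_add] at hlt
      exact lt_irrefl _ hlt
    have hKcount : ¬ K.Countable := fun hc => hK0 (hc.measure_zero _)
    obtain ⟨⟨x, hxB, hxK⟩, -⟩ := hBern K (hKS.trans hSIcc) hKc.isClosed hKcount
    exact Set.eq_empty_iff_forall_notMem.mp hSB x ⟨hKS hxK, hxB⟩
  -- L2: outer measure of A ∩ B equals volume (A ∩ [0,1])
  have L2 : ∀ A : Set ℝ, MeasurableSet A → volume (A ∩ B) = volume (A ∩ Set.Icc 0 1) := by
    intro A hA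
    apply le_antisymm
    · exact measure_mono (Set.inter_subset_inter_right A hB)
    · set U := toMeasurable volume (A ∩ B) with hU
      have hUm : MeasurableSet U := measurableSet_toMeasurable _ _
      have hUv : volume U = volume (A ∩ B) := measure_toMeasurable _
      have hsub : A ∩ B ⊆ U := subset_toMeasurable _ _
      have hSm : MeasurableSet ((A ∩ Set.Icc 0 1) \ U) :=
        (hA.inter measurableSet_Icc).diff hUm
      have hS0 : volume ((A ∩ Set.Icc 0 1) \ U) = 0 := by
        apply L1 _ hSm (fun x hx => hx.1.2)
        ext x
        simp only [Set.mem_inter_iff, Set.mem_diff, Set.mem_empty_iff_false, iff_false]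
        rintro ⟨⟨⟨hxA, -⟩, hxU⟩, hxB⟩
        exact hxU (hsub ⟨hxA, hxB⟩)
      calc volume (A ∩ Set.Icc 0 1) ≤ volume (U ∪ (A ∩ Set.Icc 0 1) \ U) :=
            measure_mono (fun x hx => by by_cases hxU : x ∈ U <;> simp [hxU, hx])
        _ ≤ volume U + volume ((A ∩ Set.Icc 0 1) \ U) := measure_union_le _ _
        _ = volume (A ∩ B) := by rw [hS0, add_zero, hUv]
  constructor
  · intro A A' hA hA' hEq
    rw [Measure.restrict_apply' measurableSet_Icc, Measure.restrict_apply' measurableSet_Icc,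
      ← L2 A hA, ← L2 A' hA', hEq]
  · -- Construct the probability measure via `Measure.ofMeasurable`
    have hpre : ∀ A : Set ℝ, MeasurableSet A → MeasurableSet (Subtype.val ⁻¹' A : Set B) :=
      fun A hA => hA.preimage measurable_subtype_coe
    set m : (s : Set B) → MeasurableSet s → ENNReal :=
      fun s _ => volume (Subtype.val '' s) with hm
    have m0 : m ∅ MeasurableSet.empty = 0 := by simp [hm]
    have mU : ∀ ⦃f : ℕ → Set B⦄ (h : ∀ i, MeasurableSet (f i)),
        Pairwise (Function.onFun Disjoint f) →
        m (⋃ i, f i) (MeasurableSet.iUnion h) = ∑' i, m (f i) (h i) := by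
      intro f hf hd
      have hex : ∀ i, ∃ A : Set ℝ, MeasurableSet A ∧ Subtype.val ⁻¹' A = f i := fun i =>
        MeasurableSpace.measurableSet_comap.mp (hf i)
      choose A hAm hApre using hex
      have himg : ∀ i, Subtype.val '' f i = A i ∩ B := by
        intro i
        rw [← hApre i, Subtype.image_preimage_coe, Set.inter_comm]
      set A' := disjointed A with hA'
      have hA'm : ∀ i, MeasurableSet (A' i) := MeasurableSet.disjointed hAm
      have hA'B : ∀ i, A' i ∩ B = A i ∩ B := by
        intro i
        refine Set.Subset.antisymm
          (Set.inter_subset_inter_left _ (disjointed_subset A i)) ?_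
        rintro x ⟨hxA, hxB⟩
        refine ⟨?_, hxB⟩
        rw [hA', disjointed_eq_inter_compl]
        refine ⟨hxA, ?_⟩
        simp only [Set.mem_iInter, Set.mem_compl_iff]
        intro j hj hxAj
        have hmem : (⟨x, hxB⟩ : B) ∈ f i ∩ f j := by
          rw [← hApre i, ← hApre j]
          exact ⟨hxA, hxAj⟩
        exact (hd (Nat.ne_of_gt hj)).le_bot hmem
      have himgU : Subtype.val '' (⋃ i, f i) = (⋃ i, A' i) ∩ B := by
        rw [Set.image_iUnion, hA', iUnion_disjointed, Set.iUnion_inter]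
        exact Set.iUnion_congr himg
      have hdisj : Pairwise (Function.onFun Disjoint fun i => A' i ∩ Set.Icc (0:ℝ) 1) := by
        intro i j hij
        exact ((disjoint_disjointed A hij).inter_left _).inter_right _
      calc m (⋃ i, f i) (MeasurableSet.iUnion hf)
          = volume ((⋃ i, A' i) ∩ B) := by rw [hm]; exact congrArg _ himgU
        _ = volume ((⋃ i, A' i) ∩ Set.Icc 0 1) := L2 _ (MeasurableSet.iUnion hA'm)
        _ = volume (⋃ i, A' i ∩ Set.Icc 0 1) := by rw [Set.iUnion_inter]
        _ = ∑' i, volume (A' i ∩ Set.Icc 0 1) :=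
            measure_iUnion hdisj fun i => (hA'm i).inter measurableSet_Icc
        _ = ∑' i, m (f i) (hf i) := by
            refine tsum_congr fun i => ?_
            simp only [hm, himg i]
            rw [← hA'B i, L2 _ (hA'm i)]
    set P := Measure.ofMeasurable m m0 mU with hP
    have happly : ∀ A : Set ℝ, MeasurableSet A →
        P (Subtype.val ⁻¹' A) = volume (A ∩ Set.Icc 0 1) := by
      intro A hA
      rw [hP, Measure.ofMeasurable_apply _ (hpre A hA)]
      simp only [hm, Subtype.image_preimage_coe]
      rw [Set.inter_comm B A, L2 A hA]
    refine ⟨P, ?_, ?_⟩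
    · constructor
      have huniv : (Set.univ : Set B) = Subtype.val ⁻¹' (Set.univ : Set ℝ) := rfl
      rw [huniv, happly _ MeasurableSet.univ, Set.univ_inter]
      simp [Real.volume_Icc]
    · intro A hA
      rw [happly A hA, Measure.restrict_apply' measurableSet_Icc]
end

section
/- There is no probability measure Q on (B × Bᶜ) with the trace Borel product σ-algebra, where B ⊆ [0,1] is a Bernstein set, such that Q((A¹ ∩ B) × (A² ∩ Bᶜ)) = λ(A¹ ∩ A²) for all Borel sets A¹, A² ⊆ [0,1]. -/
open MeasureTheory

/-- For a Bernstein set `B ⊆ [0,1]` there is no probability measure `Q`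
on `B × Bᶜ` (with the product of the trace Borel σ-algebras) such that
`Q((A¹ ∩ B) × (A² ∩ Bᶜ)) = λ(A¹ ∩ A²)` for all Borel sets `A¹, A² ⊆ [0,1]`. -/
theorem stmt_2 (B : Set ℝ) (hB : B ⊆ Set.Icc 0 1)
    (hBern : ∀ C : Set ℝ, C ⊆ Set.Icc 0 1 → IsClosed C → ¬ C.Countable →
      (B ∩ C).Nonempty ∧ (Bᶜ ∩ C).Nonempty) :
    ¬ ∃ Q : Measure (↥B × ↥(Bᶜ)), IsProbabilityMeasure Q ∧
      ∀ A₁ A₂ : Set ℝ, MeasurableSet A₁ → MeasurableSet A₂ →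
        A₁ ⊆ Set.Icc 0 1 → A₂ ⊆ Set.Icc 0 1 →
        Q {p : ↥B × ↥(Bᶜ) | (p.1 : ℝ) ∈ A₁ ∧ (p.2 : ℝ) ∈ A₂} = volume (A₁ ∩ A₂) := by
  rintro ⟨Q, hQ, hspec⟩
  -- the intervals [i/k, (i+1)/k)
  set I : ℕ → ℕ → Set ℝ := fun k i => Set.Ico ((i : ℝ) / k) (((i : ℝ) + 1) / k) with hI
  set S : ℕ → ℕ → Set (↥B × ↥(Bᶜ)) := fun k i =>
    {p : ↥B × ↥(Bᶜ) | (p.1 : ℝ) ∈ I k i ∧ (p.2 : ℝ) ∈ I k i} with hSdef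
  have hmeasS : ∀ k i, MeasurableSet (S k i) := by
    intro k i
    have h1 : Measurable (fun p : ↥B × ↥(Bᶜ) => (p.1 : ℝ)) :=
      measurable_subtype_coe.comp measurable_fst
    have h2 : Measurable (fun p : ↥B × ↥(Bᶜ) => (p.2 : ℝ)) :=
      measurable_subtype_coe.comp measurable_snd
    exact (h1 measurableSet_Ico).inter (h2 measurableSet_Ico)
  have hIsub : ∀ k i : ℕ, 0 < k → i < k → I k i ⊆ Set.Icc 0 1 := by
    intro k i hk hik x hx
    have hk' : (0 : ℝ) < k := by exact_mod_cast hk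
    constructor
    · calc (0 : ℝ) ≤ (i : ℝ) / k := by positivity
        _ ≤ x := hx.1
    · have : ((i : ℝ) + 1) / k ≤ 1 := by
        rw [div_le_one hk']
        have : (i : ℕ) + 1 ≤ k := hik
        exact_mod_cast this
      exact le_of_lt (lt_of_lt_of_le hx.2 this)
  have hQS : ∀ k i : ℕ, 0 < k → i < k → Q (S k i) = ENNReal.ofReal (1 / k) := by
    intro k i hk hik
    have := hspec (I k i) (I k i) measurableSet_Ico measurableSet_Ico
      (hIsub k i hk hik) (hIsub k i hk hik)
    rw [hSdef]
    simp only []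
    rw [this, Set.inter_self, hI]
    rw [Real.volume_Ico]
    congr 1
    have hk' : (0 : ℝ) < k := by exact_mod_cast hk
    field_simp
    ring
  -- the union over i < k has measure 1
  have hTk : ∀ k : ℕ, 0 < k → Q (⋃ i ∈ Finset.range k, S k i) = 1 := by
    intro k hk
    have hdisj : (↑(Finset.range k) : Set ℕ).PairwiseDisjoint (S k) := by
      intro i _ j _ hij
      refine Set.disjoint_left.2 ?_
      intro p hpi hpj
      have hk' : (0 : ℝ) < k := by exact_mod_cast hk
      have key : ∀ a b : ℕ, a < b → ¬ ((p.1 : ℝ) ∈ I k a ∧ (p.1 : ℝ) ∈ I k b) := by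
        intro a b hab ⟨ha, hb2⟩
        have h1 : (p.1 : ℝ) < ((a : ℝ) + 1) / k := ha.2
        have h2 : ((b : ℝ)) / k ≤ (p.1 : ℝ) := hb2.1
        have h3 : ((a : ℝ) + 1) ≤ (b : ℝ) := by exact_mod_cast hab
        have h4 : ((a : ℝ) + 1) / k ≤ (b : ℝ) / k := by gcongr
        linarith
      rcases lt_or_gt_of_ne hij with h | h
      · exact key i j h ⟨hpi.1, hpj.1⟩
      · exact key j i h ⟨hpj.1, hpi.1⟩
    rw [measure_biUnion_finset hdisj (fun i _ => hmeasS k i)]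
    have : ∀ i ∈ Finset.range k, Q (S k i) = ENNReal.ofReal (1 / k) := fun i hi =>
      hQS k i hk (Finset.mem_range.1 hi)
    rw [Finset.sum_congr rfl this, Finset.sum_const, Finset.card_range, nsmul_eq_mul]
    have hk' : (0 : ℝ) < k := by exact_mod_cast hk
    rw [show ((k : ℕ) : ENNReal) = ENNReal.ofReal (k : ℝ) by
      simp [ENNReal.ofReal_natCast]]
    rw [← ENNReal.ofReal_mul (le_of_lt hk')]
    rw [mul_one_div, div_self (ne_of_gt hk')]
    simp
  -- complements have measure zero
  have hTc : ∀ k : ℕ, 0 < k → Q ((⋃ i ∈ Finset.range k, S k i)ᶜ) = 0 := by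
    intro k hk
    have hm : MeasurableSet (⋃ i ∈ Finset.range k, S k i) :=
      MeasurableSet.biUnion (Finset.range k).countable_toSet (fun i _ => hmeasS k i)
    rw [measure_compl hm (measure_ne_top Q _), hTk k hk, measure_univ]
    simp
  -- the intersection over k of the unions is empty
  have hempty : (⋂ k : ℕ, ⋃ i ∈ Finset.range (k + 1), S (k + 1) i) = ∅ := by
    ext p
    simp only [Set.mem_iInter, Set.mem_iUnion, Set.mem_empty_iff_false, iff_false]
    intro h
    have hxy : (p.1 : ℝ) = (p.2 : ℝ) := by
      by_contra hne
      obtain ⟨k, hk⟩ := exists_nat_one_div_lt (abs_pos.2 (sub_ne_zero.2 hne))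
      obtain ⟨i, _, hi⟩ := h k
      have h1 := hi.1
      have h2 := hi.2
      have hk' : (0 : ℝ) < (k : ℝ) + 1 := by positivity
      have hdiff : ((i : ℝ) + 1) / (↑(k + 1) : ℝ) - (i : ℝ) / (↑(k + 1) : ℝ)
          = 1 / ((k : ℝ) + 1) := by push_cast; field_simp; ring
      have hb : |(p.1 : ℝ) - (p.2 : ℝ)| < 1 / ((k : ℝ) + 1) := by
        rw [abs_sub_lt_iff]
        have a1 := h1.1; have a2 := h1.2; have b1 := h2.1; have b2 := h2.2
        constructor <;> linarith
      exact absurd hb (not_lt.2 hk.le)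
    have hBmem : (p.1 : ℝ) ∈ B := p.1.2
    have hBc : (p.2 : ℝ) ∈ Bᶜ := p.2.2
    rw [hxy] at hBmem
    exact hBc hBmem
  -- contradiction
  have huniv : (Set.univ : Set (↥B × ↥(Bᶜ))) ⊆
      ⋃ k : ℕ, (⋃ i ∈ Finset.range (k + 1), S (k + 1) i)ᶜ := by
    rw [← Set.compl_iInter, hempty, Set.compl_empty]
  have h1 : (1 : ENNReal) ≤ 0 := by
    calc (1 : ENNReal) = Q Set.univ := (measure_univ).symm
      _ ≤ Q (⋃ k : ℕ, (⋃ i ∈ Finset.range (k + 1), S (k + 1) i)ᶜ) := measure_mono huniv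
      _ ≤ ∑' k : ℕ, Q ((⋃ i ∈ Finset.range (k + 1), S (k + 1) i)ᶜ) := measure_iUnion_le _
      _ = 0 := by
          rw [tsum_congr (fun k : ℕ => hTc (k + 1) (Nat.succ_pos k))]; exact tsum_zero
  exact absurd h1 (by norm_num)
end

section
/- For a Polish space S, the map Φ : 𝒫(C) × [0,1] → C, where C ⊆ [0,1] is the Cantor set and Φ(μ, u) = sup { x ∈ [0,1] : μ([0,x) ∩ C) ≤ u } is the quantile function of μ, is jointly Borel measurable in (μ, u). -/
open MeasureTheory

noncomputable section

/-- The quantile function of a measure `μ` on the Cantor set `C = cantorSet`: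
`Φ(μ, u) = sup { x ∈ [0,1] : μ([0,x) ∩ C) ≤ u }`. -/
def cantorQuantile (μ : Measure ↥cantorSet) (u : ℝ) : ℝ :=
  sSup {x | x ∈ Set.Icc (0 : ℝ) 1 ∧
    μ (Subtype.val ⁻¹' Set.Ico (0 : ℝ) x) ≤ ENNReal.ofReal u}

/-- Borel σ-algebra of the weak topology on `𝒫(C)`. -/
instance : MeasurableSpace (ProbabilityMeasure ↥cantorSet) := borel _

instance : BorelSpace (ProbabilityMeasure ↥cantorSet) := ⟨rfl⟩

namespace CantorQuantileAux

open Set Filter Topology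

lemma one_mem_preCantorSet (n : ℕ) : (1 : ℝ) ∈ preCantorSet n := by
  induction n with
  | zero => simp [preCantorSet]
  | succ n ih => exact Or.inr ⟨1, ih, by norm_num⟩

lemma one_mem_cantorSet : (1 : ℝ) ∈ cantorSet :=
  Set.mem_iInter.mpr one_mem_preCantorSet

/-- The defining set of the quantile. -/
def CQset (μ : Measure ↥cantorSet) (u : ℝ) : Set ℝ :=
  {x | x ∈ Set.Icc (0 : ℝ) 1 ∧
    μ (Subtype.val ⁻¹' Set.Ico (0 : ℝ) x) ≤ ENNReal.ofReal u}

lemma quantile_eq (μ : Measure ↥cantorSet) (u : ℝ) :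
    cantorQuantile μ u = sSup (CQset μ u) := rfl

lemma zero_mem_CQset (μ : Measure ↥cantorSet) (u : ℝ) : (0 : ℝ) ∈ CQset μ u := by
  refine ⟨by simp, ?_⟩
  simp [Set.Ico_self]

lemma CQset_nonempty (μ : Measure ↥cantorSet) (u : ℝ) : (CQset μ u).Nonempty :=
  ⟨0, zero_mem_CQset μ u⟩

lemma CQset_bddAbove (μ : Measure ↥cantorSet) (u : ℝ) : BddAbove (CQset μ u) :=
  ⟨1, fun _ hx => hx.1.2⟩

lemma quantile_nonneg (μ : Measure ↥cantorSet) (u : ℝ) : 0 ≤ cantorQuantile μ u :=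
  le_csSup (CQset_bddAbove μ u) (zero_mem_CQset μ u)

lemma quantile_le_one (μ : Measure ↥cantorSet) (u : ℝ) : cantorQuantile μ u ≤ 1 :=
  csSup_le (CQset_nonempty μ u) fun _ hx => hx.1.2

lemma F_mono (μ : Measure ↥cantorSet) {s t : ℝ} (h : s ≤ t) :
    μ (Subtype.val ⁻¹' Set.Ico (0 : ℝ) s) ≤ μ (Subtype.val ⁻¹' Set.Ico (0 : ℝ) t) :=
  measure_mono (Set.preimage_mono (Set.Ico_subset_Ico_right h))

/-- Left-continuity of the cdf at the quantile: `F(Q) ≤ u`. -/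
lemma F_quantile_le (μ : Measure ↥cantorSet) (u : ℝ) :
    μ (Subtype.val ⁻¹' Set.Ico (0 : ℝ) (cantorQuantile μ u)) ≤ ENNReal.ofReal u := by
  set Q := cantorQuantile μ u with hQ
  have hcover : (Subtype.val ⁻¹' Set.Ico (0 : ℝ) Q : Set ↥cantorSet)
      = ⋃ r : {r : ℚ // (r : ℝ) < Q}, Subtype.val ⁻¹' Set.Ico (0 : ℝ) (r : ℝ) := by
    ext c
    simp only [Set.mem_preimage, Set.mem_iUnion, Set.mem_Ico]
    constructor
    · rintro ⟨h0, hcQ⟩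
      obtain ⟨r, hr1, hr2⟩ := exists_rat_btwn hcQ
      exact ⟨⟨r, hr2⟩, h0, hr1⟩
    · rintro ⟨r, h0, hr⟩
      exact ⟨h0, hr.trans r.2⟩
  have hdir : Directed (· ⊆ ·)
      (fun r : {r : ℚ // (r : ℝ) < Q} =>
        (Subtype.val ⁻¹' Set.Ico (0 : ℝ) (r : ℝ) : Set ↥cantorSet)) := by
    intro i j
    rcases le_total (i : ℚ) (j : ℚ) with h | h
    · exact ⟨j, Set.preimage_mono (Set.Ico_subset_Ico_right (by exact_mod_cast h)),
        subset_rfl⟩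
    · exact ⟨i, subset_rfl,
        Set.preimage_mono (Set.Ico_subset_Ico_right (by exact_mod_cast h))⟩
  rw [hcover, hdir.measure_iUnion]
  apply iSup_le
  rintro ⟨r, hr⟩
  obtain ⟨x, hxS, hrx⟩ := exists_lt_of_lt_csSup (CQset_nonempty μ u) hr
  exact (F_mono μ hrx.le).trans hxS.2

/-- The key characterization: for `t ≤ 1`, `t ≤ Q(μ,u)` iff `F(t) ≤ u`. -/
lemma le_quantile_iff (μ : Measure ↥cantorSet) (u : ℝ) {t : ℝ} (ht : t ≤ 1) :
    t ≤ cantorQuantile μ u ↔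
      μ (Subtype.val ⁻¹' Set.Ico (0 : ℝ) t) ≤ ENNReal.ofReal u := by
  constructor
  · intro h
    exact (F_mono μ h).trans (F_quantile_le μ u)
  · intro h
    rcases le_or_gt t 0 with h0 | h0
    · exact h0.trans (quantile_nonneg μ u)
    · exact le_csSup (CQset_bddAbove μ u) ⟨⟨h0.le, ht⟩, h⟩

lemma isOpen_pre (t : ℝ) :
    IsOpen (Subtype.val ⁻¹' Set.Ico (0 : ℝ) t : Set ↥cantorSet) := by
  have h : (Subtype.val ⁻¹' Set.Ico (0 : ℝ) t : Set ↥cantorSet)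
      = Subtype.val ⁻¹' Set.Iio t := by
    ext c
    simp [Set.mem_Ico, (cantorSet_subset_unitInterval c.2).1]
  rw [h]
  exact isOpen_Iio.preimage continuous_subtype_val

lemma measurable_F (t : ℝ) :
    Measurable (fun μ : ProbabilityMeasure ↥cantorSet =>
      (μ : Measure ↥cantorSet) (Subtype.val ⁻¹' Set.Ico (0 : ℝ) t)) := by
  apply LowerSemicontinuous.measurable
  rw [lowerSemicontinuous_iff_le_liminf]
  intro μ
  exact ProbabilityMeasure.le_liminf_measure_open_of_tendsto
    (μs := id) (L := 𝓝 μ) tendsto_id (isOpen_pre t)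

end CantorQuantileAux

open CantorQuantileAux

/-- The quantile map `Φ : 𝒫(C) × [0,1] → C` is jointly Borel measurable
(in particular it takes values in the Cantor set `C`). -/
theorem stmt_3 :
    (Measurable fun p : ProbabilityMeasure ↥cantorSet × Set.Icc (0 : ℝ) 1 =>
      cantorQuantile (p.1 : Measure ↥cantorSet) (p.2 : ℝ)) ∧
    ∀ (μ : ProbabilityMeasure ↥cantorSet) (u : Set.Icc (0 : ℝ) 1),
      cantorQuantile (μ : Measure ↥cantorSet) (u : ℝ) ∈ cantorSet := by
  constructor
  · -- joint measurability
    apply measurable_of_Ici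
    intro t
    rcases le_or_gt t 1 with ht | ht
    · have hset : (fun p : ProbabilityMeasure ↥cantorSet × Set.Icc (0 : ℝ) 1 =>
          cantorQuantile (p.1 : Measure ↥cantorSet) (p.2 : ℝ)) ⁻¹' Set.Ici t
          = {p : ProbabilityMeasure ↥cantorSet × Set.Icc (0 : ℝ) 1 |
              (p.1 : Measure ↥cantorSet) (Subtype.val ⁻¹' Set.Ico (0 : ℝ) t)
                ≤ ENNReal.ofReal (p.2 : ℝ)} := by
        ext p
        simp only [Set.mem_preimage, Set.mem_Ici, Set.mem_setOf_eq]
        exact le_quantile_iff (p.1 : Measure ↥cantorSet) (p.2 : ℝ) ht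
      rw [hset]
      exact measurableSet_le ((measurable_F t).comp measurable_fst)
        (ENNReal.measurable_ofReal.comp (measurable_subtype_coe.comp measurable_snd))
    · have hset : (fun p : ProbabilityMeasure ↥cantorSet × Set.Icc (0 : ℝ) 1 =>
          cantorQuantile (p.1 : Measure ↥cantorSet) (p.2 : ℝ)) ⁻¹' Set.Ici t = ∅ := by
        ext p
        simp only [Set.mem_preimage, Set.mem_Ici, Set.mem_empty_iff_false, iff_false, not_le]
        exact (quantile_le_one _ _).trans_lt ht
      rw [hset]
      exact MeasurableSet.empty
  · -- the quantile lies in the Cantor set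
    intro μ u
    by_contra hQ
    set Q := cantorQuantile (μ : Measure ↥cantorSet) (u : ℝ) with hQdef
    have hQ0 : 0 ≤ Q := quantile_nonneg _ _
    have hQ1 : Q ≤ 1 := quantile_le_one _ _
    set T := cantorSet ∩ Set.Ici Q with hT
    have hTne : T.Nonempty := ⟨1, one_mem_cantorSet, hQ1⟩
    have hTbdd : BddBelow T := ⟨0, fun x hx => (cantorSet_subset_unitInterval hx.1).1⟩
    have hb : sInf T ∈ T :=
      (isClosed_cantorSet.inter isClosed_Ici).csInf_mem hTne hTbdd
    set b := sInf T with hbdef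
    have hQb : Q < b := lt_of_le_of_ne hb.2 fun h => hQ (h ▸ hb.1)
    have hb1 : b ≤ 1 := csInf_le hTbdd ⟨one_mem_cantorSet, hQ1⟩
    have heq : (Subtype.val ⁻¹' Set.Ico (0 : ℝ) b : Set ↥cantorSet)
        = Subtype.val ⁻¹' Set.Ico (0 : ℝ) Q := by
      ext c
      simp only [Set.mem_preimage, Set.mem_Ico]
      refine and_congr_right fun _ => ⟨fun hcb => ?_, fun h => h.trans hQb⟩
      by_contra hcQ
      exact absurd (csInf_le hTbdd ⟨c.2, not_lt.1 hcQ⟩) (not_le.2 hcb)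
    have hbS : b ∈ CQset (μ : Measure ↥cantorSet) (u : ℝ) := by
      refine ⟨⟨(cantorSet_subset_unitInterval hb.1).1, hb1⟩, ?_⟩
      rw [heq]
      exact F_quantile_le _ _
    exact absurd (le_csSup (CQset_bddAbove _ _) hbS) (not_le.2 hQb)

end
end

section
/- Let π be a bicausal coupling between filtered processes 𝕏 and 𝕐, and let X̌ be a self-aware lift of 𝕏 defined on Ω^𝕏. Regarding X̌ as a process on the product space (Ω^𝕏 × Ω^𝕐, 𝓕^𝕏 ⊗ 𝓕^𝕐, π) with the product filtration (𝓕^𝕏_t ⊗ 𝓕^𝕐_t), X̌ is again self-aware: L_π(X̌ | 𝓕^𝕏_t ⊗ 𝓕^𝕐_t) = L_π(X̌ | X̌_{1:t}) for all t. -/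
open MeasureTheory ProbabilityTheory

/-- The σ-algebra `σ(Y_{1:t})` generated by the process `Y` up to time `t`. -/
def pathSigma {Ω E : Type*} {N : ℕ} [MeasurableSpace E] (Y : Fin N → Ω → E) (t : Fin N) :
    MeasurableSpace Ω :=
  ⨆ i : Fin N, ⨆ _ : i ≤ t, MeasurableSpace.comap (Y i) inferInstance

/-- A process `Y` adapted to a filtration `ℱ` is *self-aware* if the conditional law of the
whole path given `ℱ t` coincides with the conditional law given `Y_{1:t}`, for every `t`;
expressed via conditional expectations of indicators of path events. -/
def SelfAware {Ω E : Type*} {N : ℕ} [mΩ : MeasurableSpace Ω] [MeasurableSpace E]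
    (μ : Measure Ω) (ℱ : Fin N → MeasurableSpace Ω) (Y : Fin N → Ω → E) : Prop :=
  ∀ t : Fin N, ∀ s : Set (Fin N → E), MeasurableSet s →
    μ[Set.indicator ((fun ω i => Y i ω) ⁻¹' s) (fun _ => (1 : ℝ)) | ℱ t]
      =ᵐ[μ] μ[Set.indicator ((fun ω i => Y i ω) ⁻¹' s) (fun _ => (1 : ℝ)) | pathSigma Y t]

/-- Elementary conditional independence of two σ-algebras `mA, mB` given `mC` under `μ`:
`E[1_A 1_B | mC] = E[1_A | mC] · E[1_B | mC]` a.s. for all `A ∈ mA`, `B ∈ mB`. -/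
def CondIndepC {Ω : Type*} [mΩ : MeasurableSpace Ω] (μ : Measure Ω)
    (mA mB mC : MeasurableSpace Ω) : Prop :=
  ∀ A : Set Ω, MeasurableSet[mA] A → ∀ B : Set Ω, MeasurableSet[mB] B →
    μ[Set.indicator (A ∩ B) (fun _ => (1 : ℝ)) | mC]
      =ᵐ[μ] μ[Set.indicator A (fun _ => (1 : ℝ)) | mC] *
            μ[Set.indicator B (fun _ => (1 : ℝ)) | mC]

/-- If `mA` and `mB` are conditionally independent given `mC`, then for `A ∈ mA`,
`E[1_A | mC ⊔ mB] = E[1_A | mC]`. -/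
lemma condexp_sup_of_condIndepC {Ω : Type*} {mA mB mC : MeasurableSpace Ω}
    [mΩ : MeasurableSpace Ω] {μ : Measure Ω} [IsProbabilityMeasure μ]
    (hB : mB ≤ mΩ) (hC : mC ≤ mΩ)
    (h : CondIndepC μ mA mB mC) {A : Set Ω} (hA : MeasurableSet[mA] A)
    (hA0 : MeasurableSet[mΩ] A) :
    μ[Set.indicator A (fun _ => (1 : ℝ)) | mC ⊔ mB]
      =ᵐ[μ] μ[Set.indicator A (fun _ => (1 : ℝ)) | mC] := by
  have hCB : mC ⊔ mB ≤ mΩ := sup_le hC hB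
  set f : Ω → ℝ := A.indicator (fun _ => (1 : ℝ)) with hf_def
  have hf : Integrable f μ := (integrable_const (1 : ℝ)).indicator (hA0 : MeasurableSet[mΩ] A)
  set g : Ω → ℝ := μ[f | mC] with hg_def
  have hg_int : Integrable g μ := integrable_condExp
  have hg_bdd : ∀ᵐ x ∂μ, |g x| ≤ ((1 : NNReal) : ℝ) := by
    refine ae_bdd_condExp_of_ae_bdd ?_
    filter_upwards with x
    by_cases hx : x ∈ A <;> simp [hf_def, Set.indicator_apply, hx]
  -- key computation on the π-system
  have key : ∀ Cs Bs : Set Ω, MeasurableSet[mC] Cs → MeasurableSet[mB] Bs →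
      ∫ x in Cs ∩ Bs, g x ∂μ = ∫ x in Cs ∩ Bs, f x ∂μ := by
    intro Cs Bs hCs hBs
    have hCs0 : MeasurableSet[mΩ] Cs := hC _ hCs
    have hBs0 : MeasurableSet[mΩ] Bs := hB _ hBs
    set iB : Ω → ℝ := Bs.indicator (fun _ => (1 : ℝ)) with hiB_def
    have hiB_int : Integrable iB μ := (integrable_const (1 : ℝ)).indicator (hBs0 : MeasurableSet[mΩ] Bs)
    have hgiB_int : Integrable (g * iB) μ := by
      refine hiB_int.bdd_mul (c := 1) ?_ ?_
      · exact ((stronglyMeasurable_condExp (m := mC)).mono hC).aestronglyMeasurable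
      · filter_upwards [hg_bdd] with x hx
        simpa [Real.norm_eq_abs] using hx
    have hAB_int : Integrable ((A ∩ Bs).indicator (fun _ => (1 : ℝ))) μ :=
      (integrable_const (1 : ℝ)).indicator ((hA0.inter hBs0) : MeasurableSet[mΩ] (A ∩ Bs))
    have e1 : ∫ x in Cs ∩ Bs, g x ∂μ = ∫ x in Cs, (g * μ[iB | mC]) x ∂μ := by
      calc ∫ x in Cs ∩ Bs, g x ∂μ
          = ∫ x in Cs, Bs.indicator g x ∂μ := (setIntegral_indicator hBs0).symm
        _ = ∫ x in Cs, (g * iB) x ∂μ := by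
            refine setIntegral_congr_fun hCs0 fun x _ => ?_
            by_cases hx : x ∈ Bs <;>
              simp [hiB_def, Set.indicator_apply, hx]
        _ = ∫ x in Cs, (μ[(g * iB : Ω → ℝ) | mC]) x ∂μ :=
            (setIntegral_condExp hC hgiB_int hCs).symm
        _ = ∫ x in Cs, (g * μ[iB | mC]) x ∂μ := by
            refine setIntegral_congr_ae (hC _ hCs) ?_
            filter_upwards [condExp_mul_of_stronglyMeasurable_left
              (stronglyMeasurable_condExp (m := mC)) hgiB_int hiB_int] with x hx _
            exact hx
    have e2 : ∫ x in Cs ∩ Bs, f x ∂μ = ∫ x in Cs, (g * μ[iB | mC]) x ∂μ := by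
      calc ∫ x in Cs ∩ Bs, f x ∂μ
          = ∫ x in Cs, Bs.indicator f x ∂μ := (setIntegral_indicator hBs0).symm
        _ = ∫ x in Cs, (A ∩ Bs).indicator (fun _ => (1 : ℝ)) x ∂μ := by
            refine setIntegral_congr_fun hCs0 fun x _ => ?_
            rw [hf_def, Set.indicator_indicator, Set.inter_comm Bs A]
        _ = ∫ x in Cs, (μ[(A ∩ Bs).indicator (fun _ => (1 : ℝ)) | mC]) x ∂μ :=
            (setIntegral_condExp hC hAB_int hCs).symm
        _ = ∫ x in Cs, (g * μ[iB | mC]) x ∂μ := by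
            refine setIntegral_congr_ae (hC _ hCs) ?_
            filter_upwards [h A hA Bs hBs] with x hx _
            exact hx
    rw [e1, e2]
  -- π-system generating `mC ⊔ mB`
  set p : Set (Set Ω) :=
    {S | ∃ Cs, MeasurableSet[mC] Cs ∧ ∃ Bs, MeasurableSet[mB] Bs ∧ S = Cs ∩ Bs} with hp_def
  have hgen : (mC ⊔ mB) = MeasurableSpace.generateFrom p := by
    apply le_antisymm
    · refine sup_le (fun S hS => ?_) (fun S hS => ?_)
      · exact MeasurableSpace.measurableSet_generateFrom
          ⟨S, hS, Set.univ, MeasurableSet.univ, (Set.inter_univ S).symm⟩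
      · exact MeasurableSpace.measurableSet_generateFrom
          ⟨Set.univ, MeasurableSet.univ, S, hS, (Set.univ_inter S).symm⟩
    · refine MeasurableSpace.generateFrom_le ?_
      rintro S ⟨Cs, hCs, Bs, hBs, rfl⟩
      exact MeasurableSet.inter ((le_sup_left : mC ≤ mC ⊔ mB) _ hCs)
        ((le_sup_right : mB ≤ mC ⊔ mB) _ hBs)
  have hpi : IsPiSystem p := by
    rintro _ ⟨C1, hC1, B1, hB1, rfl⟩ _ ⟨C2, hC2, B2, hB2, rfl⟩ _
    exact ⟨C1 ∩ C2, hC1.inter hC2, B1 ∩ B2, hB1.inter hB2, by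
      rw [Set.inter_inter_inter_comm]⟩
  have hint : ∀ ⦃S : Set Ω⦄, MeasurableSet[mC ⊔ mB] S →
      ∫ x in S, g x ∂μ = ∫ x in S, f x ∂μ := by
    refine @MeasurableSpace.induction_on_inter Ω (mC ⊔ mB)
      (fun S _ => ∫ x in S, g x ∂μ = ∫ x in S, f x ∂μ) p hgen hpi ?_ ?_ ?_ ?_
    · simp
    · rintro S ⟨Cs, hCs, Bs, hBs, rfl⟩
      exact key Cs Bs hCs hBs
    · intro T hT hTeq
      have hT0 : MeasurableSet[mΩ] T := hCB _ hT
      have htot : ∫ x, g x ∂μ = ∫ x, f x ∂μ := integral_condExp hC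
      have h1 := integral_add_compl hT0 hg_int
      have h2 := integral_add_compl hT0 hf
      linarith
    · intro u hdisj hmeas hind
      have hm0 : ∀ i, MeasurableSet[mΩ] (u i) := fun i => hCB _ (hmeas i)
      rw [integral_iUnion hm0 hdisj hg_int.integrableOn,
        integral_iUnion hm0 hdisj hf.integrableOn]
      exact tsum_congr hind
  refine (ae_eq_condExp_of_forall_setIntegral_eq hCB hf
    (fun s _ _ => hg_int.integrableOn) (fun s hs _ => hint hs) ?_).symm
  exact ((stronglyMeasurable_condExp (m := mC)).mono
    (le_sup_left : mC ≤ mC ⊔ mB)).aestronglyMeasurable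

/-- Conditional expectation on a product space w.r.t. a σ-algebra pulled back from the first
factor is the pullback of the conditional expectation on the first factor. -/
lemma condexp_comap_fst {Ω₁ Ω₂ : Type*} {m : MeasurableSpace Ω₁}
    [m₁ : MeasurableSpace Ω₁] [m₂ : MeasurableSpace Ω₂]
    (π : Measure (Ω₁ × Ω₂)) [IsProbabilityMeasure π] {P₁ : Measure Ω₁}
    (hπ₁ : Measure.map Prod.fst π = P₁) (hm : m ≤ m₁)
    {f : Ω₁ → ℝ} (hf : Integrable f P₁) :
    π[(fun p : Ω₁ × Ω₂ => f p.1) | MeasurableSpace.comap Prod.fst m]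
      =ᵐ[π] fun p => (P₁[f | m]) p.1 := by
  haveI : IsProbabilityMeasure P₁ := by
    rw [← hπ₁]; exact Measure.isProbabilityMeasure_map measurable_fst.aemeasurable
  have hm' : MeasurableSpace.comap Prod.fst m ≤ (inferInstance : MeasurableSpace (Ω₁ × Ω₂)) :=
    (MeasurableSpace.comap_mono hm).trans measurable_fst.comap_le
  have hfm : AEStronglyMeasurable f (Measure.map Prod.fst π) := by
    rw [hπ₁]; exact hf.aestronglyMeasurable
  have hf' : Integrable (fun p : Ω₁ × Ω₂ => f p.1) π := by
    have : Integrable f (Measure.map Prod.fst π) := by rw [hπ₁]; exact hf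
    exact (integrable_map_measure hfm measurable_fst.aemeasurable).mp this
  have hce : AEStronglyMeasurable (P₁[f | m]) (Measure.map Prod.fst π) := by
    rw [hπ₁]; exact ((stronglyMeasurable_condExp (m := m)).mono hm).aestronglyMeasurable
  refine (ae_eq_condExp_of_forall_setIntegral_eq hm' hf' ?_ ?_ ?_).symm
  · intro s _ _
    have : Integrable (fun p : Ω₁ × Ω₂ => (P₁[f | m]) p.1) π :=
      (integrable_map_measure hce measurable_fst.aemeasurable).mp
        (by rw [hπ₁]; exact integrable_condExp)
    exact this.integrableOn
  · rintro _ ⟨A, hA, rfl⟩ -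
    have hA1 : MeasurableSet[m₁] A := hm _ hA
    calc ∫ p in Prod.fst ⁻¹' A, (P₁[f | m]) p.1 ∂π
        = ∫ x in A, (P₁[f | m]) x ∂(Measure.map Prod.fst π) :=
          (setIntegral_map hA1 hce measurable_fst.aemeasurable).symm
      _ = ∫ x in A, (P₁[f | m]) x ∂P₁ := by rw [hπ₁]
      _ = ∫ x in A, f x ∂P₁ := setIntegral_condExp hm hf hA
      _ = ∫ x in A, f x ∂(Measure.map Prod.fst π) := by rw [hπ₁]
      _ = ∫ p in Prod.fst ⁻¹' A, f p.1 ∂π :=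
          setIntegral_map hA1 hfm measurable_fst.aemeasurable
  · have hfst : @Measurable (Ω₁ × Ω₂) Ω₁ (MeasurableSpace.comap Prod.fst m) m Prod.fst :=
      Measurable.of_comap_le le_rfl
    exact ((stronglyMeasurable_condExp (m := m)).comp_measurable
      hfst).aestronglyMeasurable

lemma pathSigma_comap_fst {Ω₁ Ω₂ E : Type*} [MeasurableSpace E] {N : ℕ}
    (Y : Fin N → Ω₁ → E) (t : Fin N) :
    pathSigma (fun i (p : Ω₁ × Ω₂) => Y i p.1) t
      = MeasurableSpace.comap Prod.fst (pathSigma Y t) := by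
  simp only [pathSigma, MeasurableSpace.comap_iSup, MeasurableSpace.comap_comp]
  rfl

/-- Let `π` be a bicausal coupling of the filtered processes `𝕏` (on
`(Ω₁, ℱ, P₁)`, with path `X` and lift component `W`) and `𝕐` (on `(Ω₂, 𝒢, P₂)`), and let
`X̌ = (X, W)` be a self-aware lift of `𝕏`. Regarded as a process on the product space with
the product filtration under `π`, `X̌` is again self-aware. -/
theorem stmt_10 {Ω₁ Ω₂ E G : Type*} [m₁ : MeasurableSpace Ω₁] [m₂ : MeasurableSpace Ω₂]
    [MeasurableSpace E] [MeasurableSpace G] {N : ℕ}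
    (ℱ : Fin N → MeasurableSpace Ω₁) (hFmono : Monotone ℱ) (hFle : ∀ t, ℱ t ≤ m₁)
    (𝒢 : Fin N → MeasurableSpace Ω₂) (hGmono : Monotone 𝒢) (hGle : ∀ t, 𝒢 t ≤ m₂)
    (P₁ : Measure Ω₁) [IsProbabilityMeasure P₁] (P₂ : Measure Ω₂) [IsProbabilityMeasure P₂]
    (π : Measure (Ω₁ × Ω₂)) [IsProbabilityMeasure π]
    (hπ₁ : Measure.map Prod.fst π = P₁) (hπ₂ : Measure.map Prod.snd π = P₂)
    (hcausal₁ : ∀ t : Fin N, CondIndepC π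
      (⨆ s : Fin N, MeasurableSpace.comap Prod.fst (ℱ s))
      (MeasurableSpace.comap Prod.snd (𝒢 t)) (MeasurableSpace.comap Prod.fst (ℱ t)))
    (hcausal₂ : ∀ t : Fin N, CondIndepC π
      (⨆ s : Fin N, MeasurableSpace.comap Prod.snd (𝒢 s))
      (MeasurableSpace.comap Prod.fst (ℱ t)) (MeasurableSpace.comap Prod.snd (𝒢 t)))
    (X : Fin N → Ω₁ → E) (W : Fin N → Ω₁ → G)
    (hX : ∀ t, Measurable[ℱ t] (X t)) (hW : ∀ t, Measurable[ℱ t] (W t))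
    (hsa : SelfAware P₁ ℱ (fun t ω => (X t ω, W t ω))) :
    SelfAware π
      (fun t => MeasurableSpace.comap Prod.fst (ℱ t) ⊔ MeasurableSpace.comap Prod.snd (𝒢 t))
      (fun t p => (X t p.1, W t p.1)) := by
  intro t s hs
  have hY₁meas : ∀ i, Measurable[ℱ i] fun ω => (X i ω, W i ω) :=
    fun i => (hX i).prodMk (hW i)
  set A₁ : Set Ω₁ := (fun ω i => (X i ω, W i ω)) ⁻¹' s with hA₁def
  have hA₁ : MeasurableSet[m₁] A₁ :=
    (measurable_pi_lambda _ fun i => ((hY₁meas i).mono (hFle i) le_rfl)) hs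
  have hA₁F : MeasurableSet[⨆ u : Fin N, ℱ u] A₁ := by
    letI : MeasurableSpace Ω₁ := ⨆ u : Fin N, ℱ u
    exact (measurable_pi_lambda _ fun i => ((hY₁meas i).mono (le_iSup ℱ i) le_rfl)) hs
  set f : Ω₁ → ℝ := A₁.indicator (fun _ => (1 : ℝ)) with hfdef
  have hfint : Integrable f P₁ := (integrable_const (1 : ℝ)).indicator hA₁
  have hAmA : MeasurableSet[⨆ u : Fin N, MeasurableSpace.comap (Prod.fst : Ω₁ × Ω₂ → Ω₁) (ℱ u)]
      (Prod.fst ⁻¹' A₁) := by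
    have hiS : (⨆ u : Fin N, MeasurableSpace.comap (Prod.fst : Ω₁ × Ω₂ → Ω₁) (ℱ u))
        = MeasurableSpace.comap Prod.fst (⨆ u : Fin N, ℱ u) :=
      MeasurableSpace.comap_iSup.symm
    rw [hiS]
    exact ⟨A₁, hA₁F, rfl⟩
  have hAprod : MeasurableSet ((Prod.fst : Ω₁ × Ω₂ → Ω₁) ⁻¹' A₁) := hA₁.preimage measurable_fst
  have hBle : MeasurableSpace.comap (Prod.snd : Ω₁ × Ω₂ → Ω₂) (𝒢 t)
      ≤ (inferInstance : MeasurableSpace (Ω₁ × Ω₂)) :=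
    (MeasurableSpace.comap_mono (hGle t)).trans measurable_snd.comap_le
  have hCle : MeasurableSpace.comap (Prod.fst : Ω₁ × Ω₂ → Ω₁) (ℱ t)
      ≤ (inferInstance : MeasurableSpace (Ω₁ × Ω₂)) :=
    (MeasurableSpace.comap_mono (hFle t)).trans measurable_fst.comap_le
  have hpathle : pathSigma (fun i ω => (X i ω, W i ω)) t ≤ m₁ := by
    refine iSup_le fun i => iSup_le fun _ => ?_
    exact (hY₁meas i).comap_le.trans (hFle i)
  have step1 := condexp_sup_of_condIndepC (μ := π) hBle hCle (hcausal₁ t) hAmA hAprod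
  have step2 := condexp_comap_fst π hπ₁ (hFle t) hfint
  have step3 : (fun p : Ω₁ × Ω₂ => (P₁[f | ℱ t]) p.1)
      =ᵐ[π] fun p : Ω₁ × Ω₂ => (P₁[f | pathSigma (fun i ω => (X i ω, W i ω)) t]) p.1 := by
    have h : ∀ᵐ x ∂(Measure.map Prod.fst π),
        (P₁[f | ℱ t]) x = (P₁[f | pathSigma (fun i ω => (X i ω, W i ω)) t]) x := by
      rw [hπ₁]; exact hsa t s hs
    exact ae_of_ae_map measurable_fst.aemeasurable h
  have step4 := (condexp_comap_fst π hπ₁ hpathle hfint).symm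
  have hps : pathSigma (fun i (p : Ω₁ × Ω₂) => (X i p.1, W i p.1)) t
      = MeasurableSpace.comap Prod.fst (pathSigma (fun i ω => (X i ω, W i ω)) t) :=
    pathSigma_comap_fst (fun i ω => (X i ω, W i ω)) t
  rw [hps]
  exact step1.trans (step2.trans (step3.trans step4))
end

section
/- Let (Ω̇, 𝓕 ⊗ 𝓗, Q, (𝓕_t ⊗ 𝓗_t)) be an extension of the stochastic basis (Ω, 𝓕, P, (𝓕_t)) (in particular Q has Ω-marginal P, and for every t the σ-algebras 𝓕_N ⊗ trivial and 𝓕_t ⊗ 𝓗_t are conditionally Q-independent given 𝓕_t ⊗ trivial). If X̌ is a self-aware process on (Ω, 𝓕, P, (𝓕_t)), then its lift Ẋ̌(ω,ξ) = X̌(ω) is self-aware on the extension: L_Q(Ẋ̌ | 𝓕_t ⊗ 𝓗_t) = L_Q(Ẋ̌ | Ẋ̌_{1:t}) for all t. -/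
open MeasureTheory ProbabilityTheory

/-- Lifting a conditional expectation through the first projection. -/
lemma condexp_comp_fst {Ω Ξ : Type*} (m : MeasurableSpace Ω)
    {mΩ : MeasurableSpace Ω} {mΞ : MeasurableSpace Ξ}
    (hm : m ≤ mΩ) (P : Measure Ω) [IsProbabilityMeasure P]
    (Q : Measure (Ω × Ξ)) [IsProbabilityMeasure Q]
    (hmarg : Measure.map Prod.fst Q = P)
    (g : Ω → ℝ) (hg : Integrable g P) :
    (fun p : Ω × Ξ => (P[g|m]) p.1) =ᵐ[Q] Q[(fun p : Ω × Ξ => g p.1) | m.comap Prod.fst] := by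
  have hmf : m.comap Prod.fst ≤ (inferInstance : MeasurableSpace (Ω × Ξ)) :=
    (MeasurableSpace.comap_mono hm).trans measurable_fst.comap_le
  have hlift : ∀ h : Ω → ℝ, Integrable h P → Integrable (fun p : Ω × Ξ => h p.1) Q := by
    intro h hh
    have h1 : AEStronglyMeasurable h (Measure.map Prod.fst Q) := by
      rw [hmarg]; exact hh.aestronglyMeasurable
    have := (integrable_map_measure h1 measurable_fst.aemeasurable)
    rw [hmarg] at this
    exact this.mp hh
  refine ae_eq_condExp_of_forall_setIntegral_eq hmf (hlift g hg)
    (fun S hS _ => (hlift _ integrable_condExp).integrableOn) (fun S hS _ => ?_) ?_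
  · obtain ⟨S₀, hS₀, rfl⟩ := hS
    have hS₀' : MeasurableSet S₀ := hm _ hS₀
    have h1 : ∫ p in Prod.fst ⁻¹' S₀, (P[g|m]) p.1 ∂Q = ∫ ω in S₀, (P[g|m]) ω ∂P := by
      rw [← hmarg]
      exact (setIntegral_map hS₀' (by rw [hmarg]; exact integrable_condExp.aestronglyMeasurable)
        measurable_fst.aemeasurable).symm
    have h2 : ∫ p in Prod.fst ⁻¹' S₀, g p.1 ∂Q = ∫ ω in S₀, g ω ∂P := by
      rw [← hmarg]
      exact (setIntegral_map hS₀' (by rw [hmarg]; exact hg.aestronglyMeasurable)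
        measurable_fst.aemeasurable).symm
    rw [h1, h2, setIntegral_condExp hm hg hS₀]
  · exact StronglyMeasurable.aestronglyMeasurable
      (stronglyMeasurable_condExp.comp_measurable (measurable_iff_comap_le.mpr le_rfl))

/-- If `mA ⟂ m2 | m1` with `m1 ≤ m2`, then conditioning an `mA`-event on `m2` is the
same as conditioning on `m1`. -/
lemma condexp_of_condIndep {Ω' : Type*} (mA m1 m2 : MeasurableSpace Ω')
    {mΩ' : MeasurableSpace Ω'} (μ : Measure Ω') [IsProbabilityMeasure μ]
    (hm1 : m1 ≤ m2) (hm2 : m2 ≤ mΩ')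
    (hci : CondIndepC μ mA m2 m1) {A : Set Ω'} (hA : MeasurableSet[mA] A)
    (hAm : MeasurableSet A) :
    μ[A.indicator (fun _ => (1:ℝ)) | m2] =ᵐ[μ] μ[A.indicator (fun _ => (1:ℝ)) | m1] := by
  have hm1' : m1 ≤ mΩ' := hm1.trans hm2
  refine (ae_eq_condExp_of_forall_setIntegral_eq hm2
    ((integrable_const (1:ℝ)).indicator hAm)
    (fun B hB _ => integrable_condExp.integrableOn) (fun B hB _ => ?_)
    ((stronglyMeasurable_condExp.mono hm1).aestronglyMeasurable)).symm
  have hBm : MeasurableSet B := hm2 _ hB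
  have hindB : Integrable (B.indicator (fun _ => (1:ℝ))) μ :=
    (integrable_const (1:ℝ)).indicator hBm
  have hprod : (μ[A.indicator (fun _ => (1:ℝ)) | m1]) * B.indicator (fun _ => (1:ℝ))
      = B.indicator (μ[A.indicator (fun _ => (1:ℝ)) | m1]) := by
    funext x
    by_cases hx : x ∈ B <;> simp [hx]
  calc ∫ x in B, (μ[A.indicator (fun _ => (1:ℝ)) | m1]) x ∂μ
      = ∫ x, ((μ[A.indicator (fun _ => (1:ℝ)) | m1]) * B.indicator (fun _ => (1:ℝ))) x ∂μ := by
        rw [hprod, integral_indicator hBm]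
    _ = ∫ x, (μ[(μ[A.indicator (fun _ => (1:ℝ)) | m1]) * B.indicator (fun _ => (1:ℝ)) | m1]) x ∂μ := by
        rw [integral_condExp hm1']
    _ = ∫ x, ((μ[A.indicator (fun _ => (1:ℝ)) | m1]) * μ[B.indicator (fun _ => (1:ℝ)) | m1]) x ∂μ := by
        refine integral_congr_ae (condExp_mul_of_stronglyMeasurable_left stronglyMeasurable_condExp ?_ hindB)
        rw [hprod]
        exact integrable_condExp.indicator hBm
    _ = ∫ x, (μ[(A ∩ B).indicator (fun _ => (1:ℝ)) | m1]) x ∂μ :=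
        (integral_congr_ae (hci A hA B hB)).symm
    _ = ∫ x, (A ∩ B).indicator (fun _ => (1:ℝ)) x ∂μ := integral_condExp hm1'
    _ = ∫ x in B, A.indicator (fun _ => (1:ℝ)) x ∂μ := by
        rw [Set.inter_comm, ← Set.indicator_indicator, integral_indicator hBm]

/-- Let `(Ω × Ξ, ℱ ⊗ 𝓗, Q, (ℱ_t ⊗ 𝓗_t))` be an extension of the
stochastic basis `(Ω, ℱ, P, (ℱ_t))`: `Q` has `Ω`-marginal `P` and for every `t` the
σ-algebras `ℱ_N ⊗ triv` and `ℱ_t ⊗ 𝓗_t` are conditionally `Q`-independent given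
`ℱ_t ⊗ triv`. If `Xc` is self-aware on `(Ω, ℱ, P, (ℱ_t))`, then its lift
`Ẋ̌(ω,ξ) = Xc(ω)` is self-aware on the extension. -/
theorem stmt_12 {Ω Ξ F : Type*} [mΩ : MeasurableSpace Ω] [mΞ : MeasurableSpace Ξ]
    [MeasurableSpace F] {N : ℕ}
    (P : Measure Ω) [IsProbabilityMeasure P]
    (ℱ : Fin N → MeasurableSpace Ω) (hFmono : Monotone ℱ) (hFle : ∀ t, ℱ t ≤ mΩ)
    (𝓗 : Fin N → MeasurableSpace Ξ) (hHmono : Monotone 𝓗) (hHle : ∀ t, 𝓗 t ≤ mΞ)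
    (Q : Measure (Ω × Ξ)) [IsProbabilityMeasure Q]
    (hmarg : Measure.map Prod.fst Q = P)
    (hcausal : ∀ t : Fin N, CondIndepC Q
      (⨆ s : Fin N, MeasurableSpace.comap Prod.fst (ℱ s))
      (MeasurableSpace.comap Prod.fst (ℱ t) ⊔ MeasurableSpace.comap Prod.snd (𝓗 t))
      (MeasurableSpace.comap Prod.fst (ℱ t)))
    (Xc : Fin N → Ω → F) (hXc : ∀ t, Measurable[ℱ t] (Xc t))
    (hsa : SelfAware P ℱ Xc) :
    SelfAware Q
      (fun t => MeasurableSpace.comap Prod.fst (ℱ t) ⊔ MeasurableSpace.comap Prod.snd (𝓗 t))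
      (fun t p => Xc t p.1) := by
  intro t s hs
  have hXmeas : Measurable[⨆ i, ℱ i] (fun ω i => Xc i ω) :=
    @measurable_pi_lambda Ω (Fin N) (fun _ => F) (⨆ i, ℱ i) _ _
      (fun i => (hXc i).mono (le_iSup ℱ i) le_rfl)
  have hS₀sup : MeasurableSet[⨆ i, ℱ i] ((fun ω i => Xc i ω) ⁻¹' s) := hXmeas hs
  have hS₀ : MeasurableSet ((fun ω i => Xc i ω) ⁻¹' s) := (iSup_le hFle) _ hS₀sup
  have hgint : Integrable (((fun ω i => Xc i ω) ⁻¹' s).indicator fun _ => (1:ℝ)) P :=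
    (integrable_const _).indicator hS₀
  have hfun : (((fun p : Ω × Ξ => fun i => Xc i p.1) ⁻¹' s).indicator fun _ => (1:ℝ))
      = fun p : Ω × Ξ => (((fun ω i => Xc i ω) ⁻¹' s).indicator fun _ => (1:ℝ)) p.1 := by
    funext p
    by_cases hp : (fun i => Xc i p.1) ∈ s <;>
      simp [Set.indicator_apply, Set.mem_preimage, hp]
  have hAmA : MeasurableSet[⨆ u, (ℱ u).comap Prod.fst]
      ((fun p : Ω × Ξ => fun i => Xc i p.1) ⁻¹' s) := by
    rw [← MeasurableSpace.comap_iSup]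
    exact ⟨_, hS₀sup, rfl⟩
  have hAm : MeasurableSet ((fun p : Ω × Ξ => fun i => Xc i p.1) ⁻¹' s) :=
    measurable_fst hS₀
  have hpathle : pathSigma Xc t ≤ ℱ t :=
    iSup_le fun i => iSup_le fun hi => (measurable_iff_comap_le.mp (hXc i)).trans (hFmono hi)
  have hliftpath : pathSigma (fun i (p : Ω × Ξ) => Xc i p.1) t
      = (pathSigma Xc t).comap Prod.fst := by
    simp_rw [pathSigma, MeasurableSpace.comap_iSup, MeasurableSpace.comap_comp]
    rfl
  have hm2le : (ℱ t).comap Prod.fst ⊔ (𝓗 t).comap Prod.snd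
      ≤ (inferInstance : MeasurableSpace (Ω × Ξ)) :=
    sup_le ((MeasurableSpace.comap_mono (hFle t)).trans measurable_fst.comap_le)
      ((MeasurableSpace.comap_mono (hHle t)).trans measurable_snd.comap_le)
  have e1 := condexp_of_condIndep _ _ _ Q le_sup_left hm2le (hcausal t) hAmA hAm
  have e2 := (condexp_comp_fst (ℱ t) (hFle t) P Q hmarg _ hgint).symm
  have e3 := (hsa t s hs).comp_tendsto
    (hmarg ▸ Measure.tendsto_ae_map measurable_fst.aemeasurable)
  have e4 := condexp_comp_fst (pathSigma Xc t) (hpathle.trans (hFle t)) P Q hmarg _ hgint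
  rw [← hfun] at e2 e4
  show _ =ᵐ[Q] _
  rw [hliftpath]
  exact e1.trans (e2.trans (e3.trans e4))
end

section
/- There exist μ, μ^1, μ^2, … ∈ 𝒫_p(ℝ²) with 𝒲_p(μ^n, μ) → 0 such that there is no probability space carrying random variables X ~ μ and X^n ~ μ^n (n ≥ 1) with both E[|X^n − X|_p^p] = 𝒲_p(μ^n, μ)^p for all n and X^n → X almost surely. -/
open MeasureTheory Filter
open scoped ENNReal

noncomputable section

/-- Cost `|x₁ - y₁|^p + |x₂ - y₂|^p` for points of `ℝ²` (the `p`-th power of the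
`p`-norm distance). -/
def pCost2 (p : ℝ) (q : (ℝ × ℝ) × (ℝ × ℝ)) : ℝ≥0∞ :=
  ENNReal.ofReal (|q.1.1 - q.2.1| ^ p + |q.1.2 - q.2.2| ^ p)

/-- Couplings of two measures on `ℝ²`. -/
def Cpl (μ ν : Measure (ℝ × ℝ)) : Set (Measure ((ℝ × ℝ) × (ℝ × ℝ))) :=
  {π | Measure.map Prod.fst π = μ ∧ Measure.map Prod.snd π = ν}

/-- `𝒲_p^p`: the `p`-th power of the `p`-Wasserstein distance on `𝒫(ℝ²)`. -/
def WpPow (p : ℝ) (μ ν : Measure (ℝ × ℝ)) : ℝ≥0∞ :=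
  ⨅ π ∈ Cpl μ ν, ∫⁻ q, pCost2 p q ∂π

def kk (n : ℕ) : ℕ := Nat.log 2 (n + 1)
def jj (n : ℕ) : ℕ := n + 1 - 2 ^ kk n
def AA (n : ℕ) : Set ℝ := Set.Ico ((jj n : ℝ) / 2 ^ kk n) (((jj n : ℝ) + 1) / 2 ^ kk n)
def ff (n : ℕ) (x : ℝ) : ℝ := (AA n).indicator 1 x
def lam : Measure ℝ := volume.restrict (Set.Ico 0 1)

lemma jj_lt (n : ℕ) : jj n < 2 ^ kk n := by
  have h1 : 2 ^ kk n ≤ n + 1 := Nat.pow_log_le_self 2 (by omega)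
  have h2 : n + 1 < 2 ^ (kk n + 1) := Nat.lt_pow_succ_log_self (by norm_num) _
  have : 2 ^ (kk n + 1) = 2 ^ kk n + 2 ^ kk n := by ring
  unfold jj; omega

lemma two_pow_pos (k : ℕ) : (0:ℝ) < 2 ^ k := by positivity

lemma AA_sub (n : ℕ) : AA n ⊆ Set.Ico 0 1 := by
  apply Set.Ico_subset_Ico
  · positivity
  · rw [div_le_one (two_pow_pos _)]
    have := jj_lt n
    have : ((jj n : ℝ) + 1) ≤ 2 ^ kk n := by exact_mod_cast this
    simpa using this

lemma AA_meas (n : ℕ) : MeasurableSet (AA n) := measurableSet_Ico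

lemma vol_AA (n : ℕ) : volume (AA n) = ENNReal.ofReal ((2 ^ kk n : ℝ)⁻¹) := by
  rw [AA, Real.volume_Ico]
  congr 1
  field_simp
  ring

instance lam_prob : IsProbabilityMeasure lam :=
  ⟨by simp [lam, Real.volume_Ico]⟩

lemma lam_AA (n : ℕ) : lam (AA n) = ENNReal.ofReal ((2 ^ kk n : ℝ)⁻¹) := by
  rw [lam, Measure.restrict_apply (AA_meas n),
    Set.inter_eq_self_of_subset_left (AA_sub n), vol_AA]

lemma ff_meas (n : ℕ) : Measurable (ff n) :=
  measurable_one.indicator (AA_meas n)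

lemma ff_nonneg (n : ℕ) (x : ℝ) : 0 ≤ ff n x := by
  unfold ff; by_cases h : x ∈ AA n <;> simp [h]

lemma pCost2_meas {p : ℝ} (hp : 0 ≤ p) : Measurable (pCost2 p) := by
  unfold pCost2
  have hc : Measurable fun x : ℝ => x ^ p := (Real.continuous_rpow_const hp).measurable
  apply Measurable.ennreal_ofReal
  apply Measurable.add
  · exact hc.comp ((measurable_fst.fst.sub measurable_snd.fst).abs)
  · exact hc.comp ((measurable_fst.snd.sub measurable_snd.snd).abs)

lemma lint_ff (p : ℝ) (hp : 1 ≤ p) (n : ℕ) :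
    ∫⁻ x, ENNReal.ofReal (ff n x ^ p) ∂lam = ENNReal.ofReal ((2 ^ kk n : ℝ)⁻¹) := by
  have hp0 : p ≠ 0 := by linarith
  have : (fun x => ENNReal.ofReal (ff n x ^ p)) = (AA n).indicator (fun _ => 1) := by
    funext x
    by_cases h : x ∈ AA n <;> simp [ff, h, Real.zero_rpow hp0, Real.one_rpow]
  rw [this, lintegral_indicator (AA_meas n)]
  simp [lam_AA n]

def muu : Measure (ℝ × ℝ) := lam.map (fun x => (x, (0:ℝ)))
def muus (n : ℕ) : Measure (ℝ × ℝ) := lam.map (fun x => (x, ff n x))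

lemma g0_meas : Measurable (fun x : ℝ => (x, (0:ℝ))) := measurable_id.prodMk measurable_const
lemma gn_meas (n : ℕ) : Measurable (fun x : ℝ => (x, ff n x)) := measurable_id.prodMk (ff_meas n)

instance muu_prob : IsProbabilityMeasure muu := Measure.isProbabilityMeasure_map g0_meas.aemeasurable
instance muus_prob (n : ℕ) : IsProbabilityMeasure (muus n) :=
  Measure.isProbabilityMeasure_map (gn_meas n).aemeasurable

lemma wp_le {p : ℝ} (hp : 1 ≤ p) (n : ℕ) :
    WpPow p muu (muus n) ≤ ENNReal.ofReal ((2 ^ kk n : ℝ)⁻¹) := by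
  have hp0 : (0:ℝ) ≤ p := by linarith
  set G : ℝ → (ℝ × ℝ) × (ℝ × ℝ) := fun x => ((x, 0), (x, ff n x)) with hG
  have hGm : Measurable G := g0_meas.prodMk (gn_meas n)
  have hmem : lam.map G ∈ Cpl muu (muus n) := by
    constructor
    · rw [Measure.map_map measurable_fst hGm]; rfl
    · rw [Measure.map_map measurable_snd hGm]; rfl
  calc WpPow p muu (muus n) ≤ ∫⁻ q, pCost2 p q ∂(lam.map G) := by
        exact biInf_le _ hmem
    _ = ∫⁻ x, pCost2 p (G x) ∂lam := lintegral_map (pCost2_meas hp0) hGm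
    _ = ∫⁻ x, ENNReal.ofReal (ff n x ^ p) ∂lam := by
        apply lintegral_congr; intro x
        simp [pCost2, hG, abs_of_nonneg (ff_nonneg n x),
          Real.zero_rpow (show p ≠ 0 by linarith)]
    _ = ENNReal.ofReal ((2 ^ kk n : ℝ)⁻¹) := lint_ff p hp n

lemma kk_tendsto : Tendsto kk atTop atTop := by
  apply tendsto_atTop_atTop.mpr
  intro K
  refine ⟨2 ^ K, fun n hn => ?_⟩
  have : 2 ^ K ≤ n + 1 := by omega
  exact (Nat.le_log_iff_pow_le (by norm_num) (by omega)).mpr this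

lemma wp_tendsto {p : ℝ} (hp : 1 ≤ p) :
    Tendsto (fun n => WpPow p muu (muus n)) atTop (nhds 0) := by
  have hb : Tendsto (fun n => ENNReal.ofReal ((2 ^ kk n : ℝ)⁻¹)) atTop (nhds 0) := by
    have h1 : Tendsto (fun k : ℕ => ENNReal.ofReal ((2 ^ k : ℝ)⁻¹)) atTop (nhds 0) := by
      have : Tendsto (fun k : ℕ => ((2:ℝ) ^ k)⁻¹) atTop (nhds 0) := by
        simpa using tendsto_pow_atTop_nhds_zero_of_lt_one
          (by norm_num : (0:ℝ) ≤ 2⁻¹) (by norm_num : (2:ℝ)⁻¹ < 1) |>.congr (fun k => by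
            rw [inv_pow])
      simpa only [ENNReal.ofReal_zero, Function.comp_def] using (ENNReal.continuous_ofReal.tendsto 0).comp this
    exact h1.comp kk_tendsto
  exact tendsto_of_tendsto_of_tendsto_of_le_of_le tendsto_const_nhds hb
    (fun n => zero_le) (fun n => wp_le hp n)

lemma freq_mem {x : ℝ} (hx : x ∈ Set.Ico (0:ℝ) 1) : ∃ᶠ n in atTop, x ∈ AA n := by
  rw [frequently_atTop]
  intro N
  set k := N with hk
  set j := ⌊x * 2 ^ k⌋₊ with hj
  have hx0 : 0 ≤ x := hx.1
  have hx1 : x < 1 := hx.2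
  have hxk : x * 2 ^ k < 2 ^ k := by
    have := two_pow_pos k
    nlinarith
  have hjlt : j < 2 ^ k := by
    have h := Nat.floor_le (by positivity : (0:ℝ) ≤ x * 2 ^ k)
    have h2 : (j:ℝ) < (2 ^ k : ℕ) := by push_cast; exact lt_of_le_of_lt h hxk
    exact_mod_cast h2
  set n := 2 ^ k + j - 1 with hn
  have hn1 : n + 1 = 2 ^ k + j := by
    have : 1 ≤ 2 ^ k := Nat.one_le_two_pow
    omega
  have hkk : kk n = k := by
    rw [kk, hn1]
    exact Nat.log_eq_of_pow_le_of_lt_pow (by omega) (by rw [pow_succ]; omega)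
  have hjj : jj n = j := by rw [jj, hkk, hn1]; omega
  refine ⟨n, ?_, ?_⟩
  · have hN : N < 2 ^ N := Nat.lt_two_pow_self
    have h2N : (2:ℕ) ^ k = 2 ^ N := by rw [hk]
    omega
  · rw [AA, hkk, hjj, Set.mem_Ico]
    constructor
    · rw [div_le_iff₀ (two_pow_pos k)]
      exact Nat.floor_le (by positivity)
    · rw [lt_div_iff₀ (two_pow_pos k)]
      exact Nat.lt_floor_add_one _

lemma ae_of_map {Ω : Type} [MeasurableSpace Ω] (P : Measure Ω) [IsProbabilityMeasure P]
    {X : Ω → ℝ × ℝ} (hXm : Measurable X) {ν : Measure (ℝ × ℝ)} (hX : Measure.map X P = ν)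
    {S : Set (ℝ × ℝ)} (hS : MeasurableSet S) (h1 : ν S = 1) : ∀ᵐ ω ∂P, X ω ∈ S := by
  have hpre : P (X ⁻¹' S) = 1 := by rw [← Measure.map_apply hXm hS, hX, h1]
  rw [ae_iff]
  have : {ω | ¬ X ω ∈ S} = (X ⁻¹' S)ᶜ := rfl
  rw [this, measure_compl (hXm hS) (measure_ne_top P _), hpre, measure_univ, tsub_self]

/-- There exist probability measures `μ, μ¹, μ², … ∈ 𝒫_p(ℝ²)` with
`𝒲_p(μⁿ, μ) → 0` such that on no probability space can one find `X ~ μ` and `Xⁿ ~ μⁿ`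
with both `E[|Xⁿ − X|_p^p] = 𝒲_p(μⁿ, μ)^p` for all `n` and `Xⁿ → X` almost surely. -/
theorem stmt_16 (p : ℝ) (hp : 1 ≤ p) :
    ∃ (μ : Measure (ℝ × ℝ)) (μs : ℕ → Measure (ℝ × ℝ)),
      IsProbabilityMeasure μ ∧ (∀ n, IsProbabilityMeasure (μs n)) ∧
      Tendsto (fun n => WpPow p μ (μs n)) atTop (nhds 0) ∧
      ¬ ∃ (Ω : Type) (mΩ : MeasurableSpace Ω) (P : Measure Ω)
          (_ : IsProbabilityMeasure P) (X : Ω → ℝ × ℝ) (Xs : ℕ → Ω → ℝ × ℝ),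
          Measurable X ∧ (∀ n, Measurable (Xs n)) ∧
          Measure.map X P = μ ∧ (∀ n, Measure.map (Xs n) P = μs n) ∧
          (∀ n, (∫⁻ ω, pCost2 p (X ω, Xs n ω) ∂P) = WpPow p μ (μs n)) ∧
          (∀ᵐ ω ∂P, Tendsto (fun n => Xs n ω) atTop (nhds (X ω))) := by
  have hp0 : (0:ℝ) ≤ p := by linarith
  have hpne : p ≠ 0 := by linarith
  refine ⟨muu, muus, muu_prob, muus_prob, wp_tendsto hp, ?_⟩
  rintro ⟨Ω, mΩ, P, hP, X, Xs, hXm, hXsm, hX, hXs, hopt, hconv⟩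
  -- X₂ = 0 a.s.
  have hX2 : ∀ᵐ ω ∂P, (X ω).2 = 0 := by
    have hS : MeasurableSet {v : ℝ × ℝ | v.2 = 0} := measurable_snd (measurableSet_singleton 0)
    exact ae_of_map P hXm hX hS (by
      rw [muu, Measure.map_apply g0_meas hS]
      simp)
  -- X₁ ∈ [0,1) a.s.
  have hX1 : ∀ᵐ ω ∂P, (X ω).1 ∈ Set.Ico (0:ℝ) 1 := by
    have hS : MeasurableSet {v : ℝ × ℝ | v.1 ∈ Set.Ico (0:ℝ) 1} :=
      measurable_fst measurableSet_Ico
    exact ae_of_map P hXm hX hS (by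
      rw [muu, Measure.map_apply g0_meas hS]
      have : ((fun x : ℝ => (x, (0:ℝ))) ⁻¹' {v : ℝ × ℝ | v.1 ∈ Set.Ico (0:ℝ) 1})
          = Set.Ico (0:ℝ) 1 := rfl
      rw [this, lam, Measure.restrict_apply measurableSet_Ico]
      simp [Real.volume_Ico])
  -- graph: (Xs n)₂ = ff n ((Xs n)₁) a.s.
  have hgraph : ∀ n, ∀ᵐ ω ∂P, (Xs n ω).2 = ff n ((Xs n ω).1) := by
    intro n
    have hS : MeasurableSet {v : ℝ × ℝ | v.2 = ff n v.1} :=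
      measurableSet_eq_fun measurable_snd ((ff_meas n).comp measurable_fst)
    exact ae_of_map P (hXsm n) (hXs n) hS (by
      rw [muus, Measure.map_apply (gn_meas n) hS]
      have : ((fun x : ℝ => (x, ff n x)) ⁻¹' {v : ℝ × ℝ | v.2 = ff n v.1}) = Set.univ := by
        ext x; simp
      rw [this]; simp)
  -- first coordinates agree a.s.
  have hfst : ∀ n, ∀ᵐ ω ∂P, (X ω).1 = (Xs n ω).1 := by
    intro n
    have hg2 : Measurable fun v : ℝ × ℝ => ENNReal.ofReal (|v.2| ^ p) :=
      Measurable.ennreal_ofReal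
        ((Real.continuous_rpow_const hp0).measurable.comp measurable_snd.abs)
    have hmA : Measurable fun ω => ENNReal.ofReal (|(X ω).1 - (Xs n ω).1| ^ p) :=
      Measurable.ennreal_ofReal ((Real.continuous_rpow_const hp0).measurable.comp
        ((hXm.fst.sub (hXsm n).fst).abs))
    have hIntB : ∫⁻ ω, ENNReal.ofReal (|(X ω).2 - (Xs n ω).2| ^ p) ∂P
        = ENNReal.ofReal ((2 ^ kk n : ℝ)⁻¹) := by
      have h1 : ∫⁻ ω, ENNReal.ofReal (|(X ω).2 - (Xs n ω).2| ^ p) ∂P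
          = ∫⁻ ω, ENNReal.ofReal (|(Xs n ω).2| ^ p) ∂P := by
        apply lintegral_congr_ae
        filter_upwards [hX2] with ω h
        rw [h, zero_sub, abs_neg]
      have h2 : ∫⁻ ω, ENNReal.ofReal (|(Xs n ω).2| ^ p) ∂P
          = ∫⁻ v, ENNReal.ofReal (|v.2| ^ p) ∂(muus n) := by
        rw [← hXs n, lintegral_map hg2 (hXsm n)]
      have h3 : ∫⁻ v, ENNReal.ofReal (|v.2| ^ p) ∂(muus n)
          = ∫⁻ x, ENNReal.ofReal (ff n x ^ p) ∂lam := by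
        rw [muus, lintegral_map hg2 (gn_meas n)]
        apply lintegral_congr; intro x
        rw [abs_of_nonneg (ff_nonneg n x)]
      rw [h1, h2, h3, lint_ff p hp n]
    have hsplit : ∫⁻ ω, pCost2 p (X ω, Xs n ω) ∂P
        = (∫⁻ ω, ENNReal.ofReal (|(X ω).1 - (Xs n ω).1| ^ p) ∂P)
          + ∫⁻ ω, ENNReal.ofReal (|(X ω).2 - (Xs n ω).2| ^ p) ∂P := by
      rw [← lintegral_add_left hmA]
      apply lintegral_congr; intro ω
      rw [pCost2, ENNReal.ofReal_add (Real.rpow_nonneg (abs_nonneg _) p)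
        (Real.rpow_nonneg (abs_nonneg _) p)]
    have hzero : ∫⁻ ω, ENNReal.ofReal (|(X ω).1 - (Xs n ω).1| ^ p) ∂P = 0 := by
      have hle : (∫⁻ ω, ENNReal.ofReal (|(X ω).1 - (Xs n ω).1| ^ p) ∂P)
          + ENNReal.ofReal ((2 ^ kk n : ℝ)⁻¹) ≤ 0 + ENNReal.ofReal ((2 ^ kk n : ℝ)⁻¹) := by
        rw [← hIntB, ← hsplit, hopt n, zero_add, hIntB]
        exact wp_le hp n
      have := (ENNReal.add_le_add_iff_right ENNReal.ofReal_ne_top).mp hle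
      exact le_antisymm this zero_le
    have := (lintegral_eq_zero_iff hmA).mp hzero
    filter_upwards [this] with ω hω
    simp only [Pi.zero_apply, ENNReal.ofReal_eq_zero] at hω
    by_contra hne
    have habs : 0 < |(X ω).1 - (Xs n ω).1| := abs_pos.mpr (sub_ne_zero.mpr hne)
    have := Real.rpow_pos_of_pos habs p
    linarith
  -- combine and derive contradiction
  have hfalse : ∀ᵐ ω ∂P, False := by
    filter_upwards [hX1, hX2, hconv, ae_all_iff.mpr hfst, ae_all_iff.mpr hgraph]
      with ω h1 h2 hc hf hg
    have htend : Tendsto (fun n => ff n ((X ω).1)) atTop (nhds 0) := by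
      have : Tendsto (fun n => (Xs n ω).2) atTop (nhds (X ω).2) :=
        (continuous_snd.tendsto _).comp hc
      rw [h2] at this
      refine this.congr fun n => ?_
      rw [hg n, ← hf n]
    have hev : ∀ᶠ n in atTop, ff n ((X ω).1) < 1 :=
      htend.eventually_lt_const one_pos
    have hfreq : ∃ᶠ n in atTop, (X ω).1 ∈ AA n := freq_mem h1
    obtain ⟨n, hn1, hn2⟩ := (hfreq.and_eventually hev).exists
    rw [ff, Set.indicator_of_mem hn1] at hn2
    simp at hn2
  rw [ae_iff] at hfalse
  simp only [not_false_eq_true, Set.setOf_true] at hfalse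
  rw [measure_univ] at hfalse
  exact one_ne_zero hfalse

end
end

section
/- Let 𝕏 and 𝕐 be self-aware filtered processes (i.e. L(X | 𝓕^𝕏_t) = L(X | X_{1:t}) for all t, and analogously for 𝕐). If (Ω̄, 𝓕̄, P̄, (𝓕̄_t), (X̄, Ȳ)) is any process on a common filtered basis with X̄ self-aware with respect to (𝓕̄_t) and Ȳ self-aware with respect to (𝓕̄_t), then the joint law π = L(X̄, Ȳ) is a bicausal coupling on path space: for every t, under π the coordinates satisfy Y_{1:t} ⫫ X | X_{1:t} and X_{1:t} ⫫ Y | Y_{1:t}. -/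
open MeasureTheory ProbabilityTheory

lemma stmt19_indicator_comp {α β : Type*} (f : α → β) (s : Set β) :
    (fun x => Set.indicator s (fun _ => (1:ℝ)) (f x))
      = Set.indicator (f ⁻¹' s) (fun _ => (1:ℝ)) := by
  funext x
  by_cases h : f x ∈ s <;> simp [Set.indicator, h]

/-- Conditional expectation commutes with pushforward. -/
lemma condexp_map_comp {Ω Z : Type*} [mΩ : MeasurableSpace Ω] [mZ : MeasurableSpace Z]
    (P : Measure Ω) [IsProbabilityMeasure P] {f : Ω → Z} (hf : Measurable f)
    {g : Z → ℝ} (hgm : StronglyMeasurable g) (hg : Integrable g (Measure.map f P))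
    (m : MeasurableSpace Z) (hm : m ≤ mZ) :
    (fun ω => (MeasureTheory.condExp m (@Measure.map Ω Z mΩ mZ f P) g) (f ω))
      =ᵐ[P] P[(fun ω => g (f ω)) | MeasurableSpace.comap f m] := by
  letI : MeasurableSpace Z := mZ
  haveI : IsProbabilityMeasure (Measure.map f P) := Measure.isProbabilityMeasure_map hf.aemeasurable
  have hcle : MeasurableSpace.comap f m ≤ mΩ :=
    (MeasurableSpace.comap_mono hm).trans hf.comap_le
  have hfcm : @Measurable Ω Z (MeasurableSpace.comap f m) m f :=
    @Measurable.of_comap_le Ω Z (MeasurableSpace.comap f m) m f le_rfl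
  have hgf_int : Integrable (fun ω => g (f ω)) P :=
    (integrable_map_measure hgm.aestronglyMeasurable hf.aemeasurable).mp hg
  have hce_sm : StronglyMeasurable[m] ((Measure.map f P)[g|m]) := stronglyMeasurable_condExp
  have hce_aesm : AEStronglyMeasurable ((Measure.map f P)[g|m]) (Measure.map f P) :=
    (hce_sm.mono hm).aestronglyMeasurable
  have hce_int : Integrable (fun ω => ((Measure.map f P)[g|m]) (f ω)) P :=
    (integrable_map_measure hce_aesm hf.aemeasurable).mp integrable_condExp
  refine ae_eq_condExp_of_forall_setIntegral_eq hcle hgf_int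
    (fun s _ _ => hce_int.integrableOn) (fun s hs _ => ?_) ?_
  · obtain ⟨u, hu, rfl⟩ := hs
    calc ∫ x in f ⁻¹' u, ((Measure.map f P)[g|m]) (f x) ∂P
        = ∫ y in u, ((Measure.map f P)[g|m]) y ∂(Measure.map f P) :=
          (setIntegral_map (hm u hu) hce_aesm hf.aemeasurable).symm
      _ = ∫ y in u, g y ∂(Measure.map f P) := setIntegral_condExp hm hg hu
      _ = ∫ x in f ⁻¹' u, g (f x) ∂P :=
          setIntegral_map (hm u hu) hgm.aestronglyMeasurable hf.aemeasurable
  · exact StronglyMeasurable.aestronglyMeasurable (hce_sm.comp_measurable hfcm)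

/-- The key Ω-side conditional independence, from self-awareness of `X`. -/
lemma omega_key {Ω E F : Type*} [mΩ : MeasurableSpace Ω] [MeasurableSpace E]
    [MeasurableSpace F] {N : ℕ} (P : Measure Ω) [IsProbabilityMeasure P]
    (ℱ : Fin N → MeasurableSpace Ω) (hmono : Monotone ℱ) (hle : ∀ t, ℱ t ≤ mΩ)
    (X : Fin N → Ω → E) (Y : Fin N → Ω → F)
    (hX : ∀ t, Measurable[ℱ t] (X t)) (hY : ∀ t, Measurable[ℱ t] (Y t))
    (hsaX : SelfAware P ℱ X) (t : Fin N)
    {A : Set Ω} (hA : MeasurableSet[pathSigma Y t] A)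
    {s : Set (Fin N → E)} (hs : MeasurableSet s) :
    P[Set.indicator (A ∩ (fun ω i => X i ω) ⁻¹' s) (fun _ => (1:ℝ)) | pathSigma X t] =ᵐ[P]
      P[Set.indicator A (fun _ => (1:ℝ)) | pathSigma X t] *
      P[Set.indicator ((fun ω i => X i ω) ⁻¹' s) (fun _ => (1:ℝ)) | pathSigma X t] := by
  have hmX : pathSigma X t ≤ ℱ t :=
    iSup_le fun i => iSup_le fun hi => (hX i).comap_le.trans (hmono hi)
  have hmY : pathSigma Y t ≤ ℱ t :=
    iSup_le fun i => iSup_le fun hi => (hY i).comap_le.trans (hmono hi)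
  have hm2 : pathSigma X t ⊔ pathSigma Y t ≤ ℱ t := sup_le hmX hmY
  have hℱ : ℱ t ≤ mΩ := hle t
  have hmXΩ : pathSigma X t ≤ mΩ := hmX.trans hℱ
  have hm2Ω : pathSigma X t ⊔ pathSigma Y t ≤ mΩ := hm2.trans hℱ
  have hpath : Measurable (fun ω i => X i ω) :=
    measurable_pi_lambda _ fun i => (hX i).mono (hle i) le_rfl
  have hBΩ : MeasurableSet ((fun ω i => X i ω) ⁻¹' s) := hpath hs
  have hAΩ : MeasurableSet A := (hmY.trans hℱ) A hA
  set fA : Ω → ℝ := Set.indicator A (fun _ => (1:ℝ)) with hfAdef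
  set fB : Ω → ℝ := Set.indicator ((fun ω i => X i ω) ⁻¹' s) (fun _ => (1:ℝ)) with hfBdef
  have hintA : Integrable fA P := (integrable_const (1:ℝ)).indicator hAΩ
  have hintB : Integrable fB P := (integrable_const (1:ℝ)).indicator hBΩ
  have hboundA : ∀ x, ‖fA x‖ ≤ 1 := by
    intro x
    rw [hfAdef]
    by_cases hx : x ∈ A <;> simp [Set.indicator, hx]
  have hfA_smY : StronglyMeasurable[pathSigma Y t] fA :=
    stronglyMeasurable_const.indicator hA
  -- Step 1: E[fB | σ(X_{1:t}, Y_{1:t})] = E[fB | σ(X_{1:t})]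
  have key : P[fB|pathSigma X t ⊔ pathSigma Y t] =ᵐ[P] P[fB|pathSigma X t] := by
    have e1 : P[P[fB|ℱ t]|pathSigma X t ⊔ pathSigma Y t]
        =ᵐ[P] P[fB|pathSigma X t ⊔ pathSigma Y t] := condExp_condExp_of_le hm2 hℱ
    have e2 : P[P[fB|ℱ t]|pathSigma X t ⊔ pathSigma Y t]
        =ᵐ[P] P[P[fB|pathSigma X t]|pathSigma X t ⊔ pathSigma Y t] :=
      condExp_congr_ae (hsaX t s hs)
    have e3 : P[P[fB|pathSigma X t]|pathSigma X t ⊔ pathSigma Y t] = P[fB|pathSigma X t] :=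
      condExp_of_stronglyMeasurable hm2Ω
        (stronglyMeasurable_condExp.mono le_sup_left) integrable_condExp
    exact e1.symm.trans (e2.trans (Filter.EventuallyEq.of_eq e3))
  have hAB : Set.indicator (A ∩ (fun ω i => X i ω) ⁻¹' s) (fun _ => (1:ℝ)) = fA * fB := by
    rw [hfAdef, hfBdef]
    have := Set.inter_indicator_one (M₀ := ℝ) (s := A) (t := (fun ω i => X i ω) ⁻¹' s)
    exact this
  rw [hAB]
  have pull2 : P[fA * fB|pathSigma X t ⊔ pathSigma Y t]
      =ᵐ[P] fA * P[fB|pathSigma X t ⊔ pathSigma Y t] :=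
    condExp_stronglyMeasurable_mul_of_bound hm2Ω (hfA_smY.mono le_sup_right) hintB 1
      (Filter.Eventually.of_forall hboundA)
  have step_a : P[fA * fB | pathSigma X t]
      =ᵐ[P] P[P[fA * fB|pathSigma X t ⊔ pathSigma Y t]|pathSigma X t] :=
    (condExp_condExp_of_le le_sup_left hm2Ω).symm
  have step_b : P[P[fA * fB|pathSigma X t ⊔ pathSigma Y t]|pathSigma X t]
      =ᵐ[P] P[fA * P[fB|pathSigma X t] | pathSigma X t] :=
    condExp_congr_ae (pull2.trans (Filter.EventuallyEq.mul Filter.EventuallyEq.rfl key))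
  have hbound_h : ∀ᵐ x ∂P, ‖(P[fB|pathSigma X t]) x‖ ≤ (1:ℝ) := by
    have hb : ∀ᵐ x ∂P, |fB x| ≤ ((1 : NNReal) : ℝ) := by
      refine Filter.Eventually.of_forall fun x => ?_
      rw [hfBdef]
      by_cases hx : x ∈ (fun ω i => X i ω) ⁻¹' s <;> simp [Set.indicator, hx]
    have h1 : ∀ᵐ x ∂P, |(P[fB|pathSigma X t]) x| ≤ ((1:NNReal) : ℝ) :=
      ae_bdd_condExp_of_ae_bdd hb
    simpa [Real.norm_eq_abs] using h1
  have hcomm : fA * P[fB|pathSigma X t] = P[fB|pathSigma X t] * fA := mul_comm _ _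
  have step_c : P[fA * P[fB|pathSigma X t] | pathSigma X t]
      =ᵐ[P] P[fB|pathSigma X t] * P[fA|pathSigma X t] := by
    rw [hcomm]
    exact condExp_stronglyMeasurable_mul_of_bound hmXΩ stronglyMeasurable_condExp hintA 1
      hbound_h
  refine (step_a.trans (step_b.trans step_c)).trans ?_
  rw [mul_comm]

/-- If `X̄` and `Ȳ` are both self-aware with respect to a common
filtration `(ℱ̄_t)` on `(Ω̄, P̄)`, then the joint law `π = L(X̄, Ȳ)` on path space is a
bicausal coupling: for every `t`, under `π` the coordinate processes satisfy
`Y_{1:t} ⫫ X | X_{1:t}` and `X_{1:t} ⫫ Y | Y_{1:t}`. -/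
theorem stmt_19 {Ω E F : Type*} [mΩ : MeasurableSpace Ω] [MeasurableSpace E]
    [MeasurableSpace F] {N : ℕ}
    (P : Measure Ω) [IsProbabilityMeasure P]
    (ℱ : Fin N → MeasurableSpace Ω) (hmono : Monotone ℱ) (hle : ∀ t, ℱ t ≤ mΩ)
    (X : Fin N → Ω → E) (Y : Fin N → Ω → F)
    (hX : ∀ t, Measurable[ℱ t] (X t)) (hY : ∀ t, Measurable[ℱ t] (Y t))
    (hsaX : SelfAware P ℱ X) (hsaY : SelfAware P ℱ Y) :
    ∀ t : Fin N,
      CondIndepC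
        (Measure.map (fun ω => ((fun i : Fin N => X i ω), (fun i : Fin N => Y i ω))) P)
        (⨆ i : Fin N, ⨆ _ : i ≤ t,
          MeasurableSpace.comap (fun q : (Fin N → E) × (Fin N → F) => q.2 i) inferInstance)
        (MeasurableSpace.comap (Prod.fst : (Fin N → E) × (Fin N → F) → Fin N → E)
          inferInstance)
        (⨆ i : Fin N, ⨆ _ : i ≤ t,
          MeasurableSpace.comap (fun q : (Fin N → E) × (Fin N → F) => q.1 i)
            inferInstance) ∧
      CondIndepC
        (Measure.map (fun ω => ((fun i : Fin N => X i ω), (fun i : Fin N => Y i ω))) P)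
        (⨆ i : Fin N, ⨆ _ : i ≤ t,
          MeasurableSpace.comap (fun q : (Fin N → E) × (Fin N → F) => q.1 i) inferInstance)
        (MeasurableSpace.comap (Prod.snd : (Fin N → E) × (Fin N → F) → Fin N → F)
          inferInstance)
        (⨆ i : Fin N, ⨆ _ : i ≤ t,
          MeasurableSpace.comap (fun q : (Fin N → E) × (Fin N → F) => q.2 i)
            inferInstance) := by
  intro t
  have hpx : Measurable (fun ω (i : Fin N) => X i ω) :=
    measurable_pi_lambda _ fun i => (hX i).mono (hle i) le_rfl
  have hpy : Measurable (fun ω (i : Fin N) => Y i ω) :=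
    measurable_pi_lambda _ fun i => (hY i).mono (hle i) le_rfl
  have hΦ : Measurable (fun ω => ((fun i : Fin N => X i ω), (fun i : Fin N => Y i ω))) :=
    hpx.prodMk hpy
  haveI : IsProbabilityMeasure
      (Measure.map (fun ω => ((fun i : Fin N => X i ω), (fun i : Fin N => Y i ω))) P) :=
    Measure.isProbabilityMeasure_map hΦ.aemeasurable
  have hmXco : (⨆ i : Fin N, ⨆ _ : i ≤ t,
      MeasurableSpace.comap (fun q : (Fin N → E) × (Fin N → F) => q.1 i) inferInstance)
      ≤ (inferInstance : MeasurableSpace ((Fin N → E) × (Fin N → F))) :=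
    iSup_le fun i => iSup_le fun _ => ((measurable_pi_apply i).comp measurable_fst).comap_le
  have hmYco : (⨆ i : Fin N, ⨆ _ : i ≤ t,
      MeasurableSpace.comap (fun q : (Fin N → E) × (Fin N → F) => q.2 i) inferInstance)
      ≤ (inferInstance : MeasurableSpace ((Fin N → E) × (Fin N → F))) :=
    iSup_le fun i => iSup_le fun _ => ((measurable_pi_apply i).comp measurable_snd).comap_le
  have hcoX : MeasurableSpace.comap
      (fun ω => ((fun i : Fin N => X i ω), (fun i : Fin N => Y i ω)))
      (⨆ i : Fin N, ⨆ _ : i ≤ t,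
        MeasurableSpace.comap (fun q : (Fin N → E) × (Fin N → F) => q.1 i) inferInstance)
      = pathSigma X t := by
    simp only [MeasurableSpace.comap_iSup, MeasurableSpace.comap_comp]
    rfl
  have hcoY : MeasurableSpace.comap
      (fun ω => ((fun i : Fin N => X i ω), (fun i : Fin N => Y i ω)))
      (⨆ i : Fin N, ⨆ _ : i ≤ t,
        MeasurableSpace.comap (fun q : (Fin N → E) × (Fin N → F) => q.2 i) inferInstance)
      = pathSigma Y t := by
    simp only [MeasurableSpace.comap_iSup, MeasurableSpace.comap_comp]
    rfl
  constructor
  · intro A hA B hB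
    obtain ⟨sB, hsB, rfl⟩ := hB
    have hAmeas : MeasurableSet A := hmYco A hA
    have hBmeas : MeasurableSet (Prod.fst ⁻¹' sB :
        Set ((Fin N → E) × (Fin N → F))) := measurable_fst hsB
    have hApre : MeasurableSet[pathSigma Y t]
        ((fun ω => ((fun i : Fin N => X i ω), (fun i : Fin N => Y i ω))) ⁻¹' A) :=
      hcoY ▸ (⟨A, hA, rfl⟩ : MeasurableSet[MeasurableSpace.comap _ _] _)
    have hkey := omega_key P ℱ hmono hle X Y hX hY hsaX t hApre hsB
    have t1 := condexp_map_comp P hΦ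
      (stronglyMeasurable_const.indicator (hAmeas.inter hBmeas))
      ((integrable_const (1:ℝ)).indicator (hAmeas.inter hBmeas)) _ hmXco
    have t2 := condexp_map_comp P hΦ (stronglyMeasurable_const.indicator hAmeas)
      ((integrable_const (1:ℝ)).indicator hAmeas) _ hmXco
    have t3 := condexp_map_comp P hΦ (stronglyMeasurable_const.indicator hBmeas)
      ((integrable_const (1:ℝ)).indicator hBmeas) _ hmXco
    rw [stmt19_indicator_comp, hcoX] at t1 t2 t3
    refine (MeasureTheory.ae_map_iff hΦ.aemeasurable
      (measurableSet_eq_fun (stronglyMeasurable_condExp.mono hmXco).measurable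
        ((stronglyMeasurable_condExp.mono hmXco).measurable.mul
          (stronglyMeasurable_condExp.mono hmXco).measurable))).mpr ?_
    filter_upwards [t1, t2, t3, hkey] with ω h1 h2 h3 hk
    rw [h1, Pi.mul_apply, h2, h3]
    exact hk
  · intro A hA B hB
    obtain ⟨sB, hsB, rfl⟩ := hB
    have hAmeas : MeasurableSet A := hmXco A hA
    have hBmeas : MeasurableSet (Prod.snd ⁻¹' sB :
        Set ((Fin N → E) × (Fin N → F))) := measurable_snd hsB
    have hApre : MeasurableSet[pathSigma X t]
        ((fun ω => ((fun i : Fin N => X i ω), (fun i : Fin N => Y i ω))) ⁻¹' A) :=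
      hcoX ▸ (⟨A, hA, rfl⟩ : MeasurableSet[MeasurableSpace.comap _ _] _)
    have hkey := omega_key P ℱ hmono hle Y X hY hX hsaY t hApre hsB
    have t1 := condexp_map_comp P hΦ
      (stronglyMeasurable_const.indicator (hAmeas.inter hBmeas))
      ((integrable_const (1:ℝ)).indicator (hAmeas.inter hBmeas)) _ hmYco
    have t2 := condexp_map_comp P hΦ (stronglyMeasurable_const.indicator hAmeas)
      ((integrable_const (1:ℝ)).indicator hAmeas) _ hmYco
    have t3 := condexp_map_comp P hΦ (stronglyMeasurable_const.indicator hBmeas)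
      ((integrable_const (1:ℝ)).indicator hBmeas) _ hmYco
    rw [stmt19_indicator_comp, hcoY] at t1 t2 t3
    refine (MeasureTheory.ae_map_iff hΦ.aemeasurable
      (measurableSet_eq_fun (stronglyMeasurable_condExp.mono hmYco).measurable
        ((stronglyMeasurable_condExp.mono hmYco).measurable.mul
          (stronglyMeasurable_condExp.mono hmYco).measurable))).mpr ?_
    filter_upwards [t1, t2, t3, hkey] with ω h1 h2 h3 hk
    rw [h1, Pi.mul_apply, h2, h3]
    exact hk
end
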